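/- Let F be a field, n ≥ 1, m ≤ n, and let F₁,...,Fₘ : Mₙ(F)^{m-1} → Mₙ(F) be multilinear functions satisfying Σ_{k=1}^{m} Fₖ(x₁,...,x̂ₖ,...,xₘ) xₖ = 0 for all x₁,...,xₘ ∈ Mₙ(F). Then Fₖ = 0 for every k. -/

import Mathlib

open Matrix

/-- Left-sided functional identities on `Mₙ(F)` in `m ≤ n` variables have only the
standard solution: if `Σ_{k=1}^{m} Fₖ(x₁,...,x̂ₖ,...,xₘ)xₖ = 0` holds on `Mₙ(F)` with
each `Fₖ` multilinear and `m ≤ n`, then every `Fₖ = 0`.  (Here `m = m' + 1`.) -/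
theorem leftFI_standard_of_le {F : Type*} [Field F] (n m' : ℕ) (hm : m' + 1 ≤ n)
    (G : Fin (m' + 1) → MultilinearMap F (fun _ : Fin m' => Matrix (Fin n) (Fin n) F)
      (Matrix (Fin n) (Fin n) F))
    (hFI : ∀ x : Fin (m' + 1) → Matrix (Fin n) (Fin n) F,
      ∑ k : Fin (m' + 1), G k (fun i => x (k.succAbove i)) * x k = 0) :
    ∀ k, G k = 0 := by
  intro k
  -- Key step: `G k` vanishes on tuples of standard basis matrices.
  have key : ∀ p c : Fin m' → Fin n,
      G k (fun i => Matrix.single (p i) (c i) (1 : F)) = 0 := by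
    intro p c
    obtain ⟨cs, hcs⟩ : ∃ cs : Fin n, ∀ i, c i ≠ cs := by
      by_contra h
      push_neg at h
      have hsurj : Function.Surjective c := fun cs => (h cs).imp fun i hi => hi
      have := Fintype.card_le_of_surjective c hsurj
      simp only [Fintype.card_fin] at this
      omega
    ext r s
    have h := hFI (Fin.insertNth k (Matrix.single s cs (1 : F))
      (fun i => Matrix.single (p i) (c i) (1 : F)))
    have h2 := congrFun (congrFun h r) cs
    rw [Matrix.sum_apply] at h2
    rw [Finset.sum_eq_single k] at h2
    · simp only [Fin.insertNth_apply_same, Fin.insertNth_apply_succAbove] at h2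
      simpa using h2
    · intro j _ hj
      obtain ⟨i, rfl⟩ := Fin.exists_succAbove_eq hj
      rw [Fin.insertNth_apply_succAbove]
      exact Matrix.mul_single_apply_of_ne _ _ _ r cs (Ne.symm (hcs i)) _
    · intro hk
      exact absurd (Finset.mem_univ k) hk
  -- Expand an arbitrary tuple in terms of standard basis matrices.
  refine MultilinearMap.ext fun y => ?_
  have hy : y = fun i => ∑ pc : Fin n × Fin n,
      y i pc.1 pc.2 • Matrix.single pc.1 pc.2 (1 : F) := by
    funext i
    ext r s
    simp only [Matrix.sum_apply, Matrix.smul_apply, Matrix.single, Matrix.of_apply,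
      smul_eq_mul, mul_ite, mul_one, mul_zero]
    rw [Fintype.sum_prod_type]
    simp [ite_and, Finset.sum_ite_eq]
  rw [MultilinearMap.zero_apply, hy, MultilinearMap.map_sum]
  refine Finset.sum_eq_zero fun ρ _ => ?_
  rw [MultilinearMap.map_smul_univ, key, smul_zero]
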